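/- Let I be the ideal of the polynomial ring ℂ[z_1,z_2] generated by z_1 + z_2 and z_1² + z_1z_2 + z_2². Then the quotient ring ℂ[z_1,z_2]/I is a ℂ-vector space of dimension 2, and I is not a radical ideal: z_1 belongs to the radical of I but z_1 does not belong to I. -/

import Mathlib

open MvPolynomial

noncomputable section CuspAux

abbrev Icusp : Ideal (MvPolynomial (Fin 2) ℂ) :=
  Ideal.span ({X 0 + X 1, (X 0) ^ 2 + X 0 * X 1 + (X 1) ^ 2} :
    Set (MvPolynomial (Fin 2) ℂ))

lemma sq_mem_Icusp : ((X 0 : MvPolynomial (Fin 2) ℂ) ^ 2) ∈ Icusp := by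
  rw [Icusp, Ideal.mem_span_pair]
  exact ⟨-X 1, 1, by ring⟩

lemma sum_mem_Icusp : ((X 0 + X 1 : MvPolynomial (Fin 2) ℂ)) ∈ Icusp :=
  Ideal.subset_span (Set.mem_insert _ _)

def ψcusp : MvPolynomial (Fin 2) ℂ →ₐ[ℂ] DualNumber ℂ :=
  aeval ![DualNumber.eps, -DualNumber.eps]

lemma Icusp_le_ker : Icusp ≤ RingHom.ker ψcusp.toRingHom := by
  rw [Icusp, Ideal.span_le]
  rintro p hp
  rcases hp with rfl | rfl
  · simp [RingHom.mem_ker, ψcusp]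
  · simp only [RingHom.mem_ker, ψcusp, AlgHom.toRingHom_eq_coe, RingHom.coe_coe, map_add,
      map_pow, map_mul, aeval_X]
    simp [Matrix.cons_val_zero, Matrix.cons_val_one, sq, DualNumber.eps_mul_eps]

def ψ' : (MvPolynomial (Fin 2) ℂ ⧸ Icusp) →ₐ[ℂ] DualNumber ℂ :=
  Ideal.Quotient.liftₐ Icusp ψcusp (fun a ha => Icusp_le_ker ha)

lemma ψ'_mk (p : MvPolynomial (Fin 2) ℂ) : ψ' (Ideal.Quotient.mk Icusp p) = ψcusp p := rfl

lemma span_top :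
    Submodule.span ℂ ({1, Ideal.Quotient.mk Icusp (X 0)} :
      Set (MvPolynomial (Fin 2) ℂ ⧸ Icusp)) = ⊤ := by
  rw [eq_top_iff]
  rintro r -
  obtain ⟨p, rfl⟩ := Ideal.Quotient.mk_surjective r
  induction p using MvPolynomial.induction_on with
  | C a =>
      have : (Ideal.Quotient.mk Icusp) (C a) = a • (1 : MvPolynomial (Fin 2) ℂ ⧸ Icusp) := by
        rw [← map_one (Ideal.Quotient.mk Icusp)]
        rw [show (C a : MvPolynomial (Fin 2) ℂ) = a • 1 by simp [MvPolynomial.smul_eq_C_mul]]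
        exact map_smul (Ideal.Quotient.mkₐ ℂ Icusp) a 1
      rw [this]
      exact Submodule.smul_mem _ _ (Submodule.subset_span (Set.mem_insert _ _))
  | add p q hp hq =>
      rw [map_add]; exact Submodule.add_mem _ hp hq
  | mul_X p i hp =>
      rw [map_mul]
      -- mk p ∈ span {1, x}; multiply by mk (X i)
      have hx2 : (Ideal.Quotient.mk Icusp (X 0)) * (Ideal.Quotient.mk Icusp (X 0)) = 0 := by
        rw [← map_mul, ← sq, Ideal.Quotient.eq_zero_iff_mem]
        exact sq_mem_Icusp
      have hx1 : (Ideal.Quotient.mk Icusp (X 1)) = - Ideal.Quotient.mk Icusp (X 0) := by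
        rw [eq_neg_iff_add_eq_zero, ← map_add, add_comm, Ideal.Quotient.eq_zero_iff_mem]
        exact sum_mem_Icusp
      have key : ∀ r ∈ Submodule.span ℂ ({1, Ideal.Quotient.mk Icusp (X 0)} :
          Set (MvPolynomial (Fin 2) ℂ ⧸ Icusp)),
          r * Ideal.Quotient.mk Icusp (X 0) ∈ Submodule.span ℂ
            ({1, Ideal.Quotient.mk Icusp (X 0)} : Set (MvPolynomial (Fin 2) ℂ ⧸ Icusp)) := by
        intro r hr
        induction hr using Submodule.span_induction with
        | mem y hy =>
            rcases hy with rfl | rfl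
            · rw [one_mul]
              exact Submodule.subset_span (Set.mem_insert_of_mem _ rfl)
            · rw [hx2]; exact Submodule.zero_mem _
        | zero => rw [zero_mul]; exact Submodule.zero_mem _
        | add y z _ _ hy hz => rw [add_mul]; exact Submodule.add_mem _ hy hz
        | smul a y _ hy => rw [smul_mul_assoc]; exact Submodule.smul_mem _ _ hy
      fin_cases i
      · exact key _ hp
      · show Ideal.Quotient.mk Icusp p * Ideal.Quotient.mk Icusp (X 1) ∈ _
        have heq : Ideal.Quotient.mk Icusp p * Ideal.Quotient.mk Icusp (X 1)
            = -(Ideal.Quotient.mk Icusp p * Ideal.Quotient.mk Icusp (X 0)) := by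
          rw [hx1]; ring
        rw [heq]
        exact Submodule.neg_mem _ (key _ hp)

lemma lin_indep :
    LinearIndependent ℂ ![(1 : MvPolynomial (Fin 2) ℂ ⧸ Icusp),
      Ideal.Quotient.mk Icusp (X 0)] := by
  rw [Fintype.linearIndependent_iff]
  intro g hg
  have hsum : g 0 • (1 : MvPolynomial (Fin 2) ℂ ⧸ Icusp)
      + g 1 • Ideal.Quotient.mk Icusp (X 0) = 0 := by
    have h := hg
    rwa [Fin.sum_univ_two, Matrix.cons_val_zero, Matrix.cons_val_one, Matrix.cons_val_zero] at h
  have h0 : ψ' (g 0 • (1 : MvPolynomial (Fin 2) ℂ ⧸ Icusp)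
      + g 1 • Ideal.Quotient.mk Icusp (X 0)) = 0 := by
    rw [hsum, map_zero]
  rw [map_add, map_smul, map_smul, map_one, ψ'_mk] at h0
  have hX : ψcusp (X 0) = DualNumber.eps := by simp [ψcusp]
  rw [hX] at h0
  have h1 := congrArg TrivSqZeroExt.fst h0
  have h2 := congrArg TrivSqZeroExt.snd h0
  simp at h1 h2
  intro i; fin_cases i <;> simpa

/-- For the ideal `I = (z₁ + z₂, z₁² + z₁z₂ + z₂²)` of `ℂ[z₁,z₂]`
(the double point ideal of the cusp), the quotient `ℂ[z₁,z₂]/I` is a 2-dimensional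
ℂ-vector space, and `I` is not radical: `z₁ ∈ √I` but `z₁ ∉ I`.
Here `z₁ = X 0`, `z₂ = X 1` in `MvPolynomial (Fin 2) ℂ`. -/
theorem cusp_double_point_ideal_nonreduced :
    Module.finrank ℂ
        (MvPolynomial (Fin 2) ℂ ⧸
          Ideal.span ({X 0 + X 1, (X 0) ^ 2 + X 0 * X 1 + (X 1) ^ 2} :
            Set (MvPolynomial (Fin 2) ℂ))) = 2 ∧
    (X 0 : MvPolynomial (Fin 2) ℂ) ∈
        (Ideal.span ({X 0 + X 1, (X 0) ^ 2 + X 0 * X 1 + (X 1) ^ 2} :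
          Set (MvPolynomial (Fin 2) ℂ))).radical ∧
    (X 0 : MvPolynomial (Fin 2) ℂ) ∉
        Ideal.span ({X 0 + X 1, (X 0) ^ 2 + X 0 * X 1 + (X 1) ^ 2} :
          Set (MvPolynomial (Fin 2) ℂ)) := by
  refine ⟨?_, ⟨2, sq_mem_Icusp⟩, ?_⟩
  · have b : Module.Basis (Fin 2) ℂ (MvPolynomial (Fin 2) ℂ ⧸ Icusp) :=
      Module.Basis.mk lin_indep (by
        rw [← span_top]
        apply Submodule.span_le.mpr
        rintro y (rfl | rfl) <;>
          [exact Submodule.subset_span ⟨0, rfl⟩; exact Submodule.subset_span ⟨1, rfl⟩])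
    simpa using Module.finrank_eq_card_basis b
  · intro hmem
    have : ψcusp (X 0) = 0 := Icusp_le_ker hmem
    have hX : ψcusp (X 0) = DualNumber.eps := by simp [ψcusp]
    rw [hX] at this
    have h2 := congrArg TrivSqZeroExt.snd this
    rw [DualNumber.snd_eps, TrivSqZeroExt.snd_zero] at h2
    exact one_ne_zero h2

end CuspAux
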